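/- Let f be a maximum flow with limit x from s to t in a graph G with capacities c, where x ≥ inflow excess at s. If after pushing f the node s still has positive remaining excess (i.e., the value of f is strictly less than x), then f is a maximum s-to-t flow, and hence there is no residual s-to-t path in G_f. -/

import Mathlib

/-- A directed graph given by darts: each dart has a tail, a head, and a reverse dart. -/
structure Dgraph (V D : Type) where
  tail : D → V
  head : D → V
  rev : D → D
  rev_rev : ∀ d, rev (rev d) = d
  tail_rev : ∀ d, tail (rev d) = head d
  head_rev : ∀ d, head (rev d) = tail d

namespace Dgraph

variable {V D : Type}

/-- an antisymmetric flow assignment -/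
def Antisym (G : Dgraph V D) (f : D → ℝ) : Prop :=
  ∀ d, f (G.rev d) = - f d

/-- net inflow of a flow assignment at a node -/
noncomputable def inflow [Fintype D] [DecidableEq V] (G : Dgraph V D) (f : D → ℝ) (v : V) : ℝ :=
  ∑ d ∈ Finset.univ.filter (fun d => G.head d = v), f d

/-- one step along a dart of strictly positive capacity -/
def ResStep (G : Dgraph V D) (cap : D → ℝ) (u v : V) : Prop :=
  ∃ d, G.tail d = u ∧ G.head d = v ∧ 0 < cap d

/-- existence of a path all of whose darts have strictly positive capacity -/
def ResReach (G : Dgraph V D) (cap : D → ℝ) (u v : V) : Prop :=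
  Relation.ReflTransGen (G.ResStep cap) u v

/-- a pseudoflow: antisymmetric and respecting all capacities -/
def Pseudoflow (G : Dgraph V D) (c f : D → ℝ) : Prop :=
  G.Antisym f ∧ ∀ d, f d ≤ c d

end Dgraph

namespace Dgraph

/-- `g` is a maximum feasible flow from `a` to `b` with limit `x` (w.r.t. capacities `cap`):
it is a feasible `a`-`b` flow of value at most `x`, of greatest value among such flows. -/
def MaxLimFlow {V D : Type} [Fintype D] [DecidableEq V]
    (G : Dgraph V D) (cap : D → ℝ) (a b : V) (x : ℝ) (g : D → ℝ) : Prop :=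
  G.Antisym g ∧ (∀ d, g d ≤ cap d) ∧
  (∀ v, v ≠ a → v ≠ b → G.inflow g v = 0) ∧
  G.inflow g b ≤ x ∧
  ∀ g' : D → ℝ, G.Antisym g' → (∀ d, g' d ≤ cap d) →
    (∀ v, v ≠ a → v ≠ b → G.inflow g' v = 0) →
    G.inflow g' b ≤ x → G.inflow g' b ≤ G.inflow g b

end Dgraph


section StmtAux

namespace Dgraph

variable {V D : Type} [Fintype D] [DecidableEq V] (G : Dgraph V D)

lemma inflow_add' (f g : D → ℝ) (v : V) :
    G.inflow (fun d => f d + g d) v = G.inflow f v + G.inflow g v := by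
  simp [inflow, Finset.sum_add_distrib]

lemma inflow_sub' (f g : D → ℝ) (v : V) :
    G.inflow (fun d => f d - g d) v = G.inflow f v - G.inflow g v := by
  simp [inflow, Finset.sum_sub_distrib]

lemma inflow_smul' (a : ℝ) (f : D → ℝ) (v : V) :
    G.inflow (fun d => a * f d) v = a * G.inflow f v := by
  simp [inflow, Finset.mul_sum]

/-- a list of darts forming a walk from `u` to `v` -/
def IsWalk : List D → V → V → Prop
  | [], u, v => u = v
  | d :: L, u, v => G.tail d = u ∧ IsWalk L (G.head d) v

lemma isWalk_append (L : List D) (u v : V) (d : D) (h : G.IsWalk L u v) (hd : G.tail d = v) :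
    G.IsWalk (L ++ [d]) u (G.head d) := by
  induction L generalizing u with
  | nil => exact ⟨hd.trans h.symm, rfl⟩
  | cons e L ih => exact ⟨h.1, ih _ h.2⟩

lemma reach_walk {cap : D → ℝ} {u v : V} (h : G.ResReach cap u v) :
    ∃ L, G.IsWalk L u v ∧ ∀ d ∈ L, 0 < cap d := by
  induction h with
  | refl => exact ⟨[], rfl, by simp⟩
  | tail hab hbc ih =>
    obtain ⟨L, hw, hpos⟩ := ih
    obtain ⟨d, hdt, hdh, hdc⟩ := hbc
    refine ⟨L ++ [d], ?_, ?_⟩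
    · have := G.isWalk_append L _ _ d hw hdt
      rwa [hdh] at this
    · intro e he
      rcases List.mem_append.1 he with h' | h'
      · exact hpos e h'
      · simp only [List.mem_singleton] at h'
        subst h'; exact hdc

variable [DecidableEq D]

/-- walk indicator function (with multiplicities), antisymmetrized -/
noncomputable def chi : List D → D → ℝ
  | [], _ => 0
  | e :: L, d => chi L d + ((if d = e then (1:ℝ) else 0) - (if d = G.rev e then 1 else 0))

lemma chi_rev (L : List D) (d : D) : G.chi L (G.rev d) = - G.chi L d := by
  induction L with
  | nil => simp [chi]
  | cons e L ih =>
    have h1 : (G.rev d = e) = (d = G.rev e) :=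
      propext ⟨fun h => by rw [← h, G.rev_rev], fun h => by rw [h, G.rev_rev]⟩
    have h2 : (G.rev d = G.rev e) = (d = e) :=
      propext ⟨fun h => by rw [← G.rev_rev d, h, G.rev_rev], fun h => by rw [h]⟩
    simp only [chi, ih, h1, h2]
    ring

lemma inflow_indicator (d : D) (w : V) :
    G.inflow (fun e => if e = d then (1:ℝ) else 0) w
      = if G.head d = w then 1 else 0 := by
  rw [inflow, Finset.sum_ite_eq' _ d]
  simp

lemma inflow_chi {L : List D} {u v : V} (h : G.IsWalk L u v) (w : V) :
    G.inflow (G.chi L) w = (if w = v then (1:ℝ) else 0) - (if w = u then 1 else 0) := by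
  induction L generalizing u with
  | nil =>
    obtain rfl : u = v := h
    simp [chi, inflow]
  | cons d L ih =>
    obtain ⟨hdu, hwalk⟩ := h
    have hrw : G.chi (d :: L) = fun e =>
        G.chi L e + ((if e = d then (1:ℝ) else 0) - (if e = G.rev d then 1 else 0)) := by
      funext e; rfl
    rw [hrw, G.inflow_add']
    have h2 : G.inflow (fun e => (if e = d then (1:ℝ) else 0) - (if e = G.rev d then 1 else 0)) w
        = (if G.head d = w then (1:ℝ) else 0) - (if G.head (G.rev d) = w then 1 else 0) := by
      rw [G.inflow_sub', G.inflow_indicator, G.inflow_indicator]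
    rw [h2, ih hwalk, G.head_rev, hdu]
    have e1 : (if G.head d = w then (1:ℝ) else 0) = (if w = G.head d then 1 else 0) := by
      by_cases h : G.head d = w
      · simp [h]
      · rw [if_neg h, if_neg (fun h' => h h'.symm)]
    have e2 : (if u = w then (1:ℝ) else 0) = (if w = u then 1 else 0) := by
      by_cases h : u = w
      · simp [h]
      · rw [if_neg h, if_neg (fun h' => h h'.symm)]
    rw [e1, e2]
    ring

lemma chi_le_length (L : List D) (d : D) : G.chi L d ≤ L.length := by
  induction L with
  | nil => simp [chi]
  | cons e L ih =>
    simp only [chi, List.length_cons]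
    push_cast
    have h1 : (if d = e then (1:ℝ) else 0) ≤ 1 := by split <;> norm_num
    have h2 : (0:ℝ) ≤ (if d = G.rev e then (1:ℝ) else 0) := by split <;> norm_num
    linarith

lemma chi_nonpos_of_not_mem {L : List D} {d : D} (h : d ∉ L) : G.chi L d ≤ 0 := by
  induction L with
  | nil => simp [chi]
  | cons e L ih =>
    simp only [List.mem_cons, not_or] at h
    have h1 : (if d = e then (1:ℝ) else 0) = 0 := if_neg h.1
    have h2 : (0:ℝ) ≤ (if d = G.rev e then (1:ℝ) else 0) := by split <;> norm_num
    have := ih h.2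
    simp only [chi, h1]
    linarith

lemma mem_of_chi_pos {L : List D} {d : D} (h : 0 < G.chi L d) : d ∈ L := by
  by_contra hc
  exact absurd (G.chi_nonpos_of_not_mem hc) (not_le.2 h)

end Dgraph

end StmtAux

/-- if a maximum flow with limit `x` has value strictly less than `x`,
it is a maximum `s`-`t` flow, so there is no residual `s`-to-`t` path. -/
theorem stmt15 {V D : Type} [Fintype D] [DecidableEq V]
    (G : Dgraph V D) (c : D → ℝ) (s t : V) (hst : s ≠ t) (x : ℝ)
    (f : D → ℝ) (hf : G.MaxLimFlow c s t x f)
    (hless : G.inflow f t < x) :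
    (∀ f' : D → ℝ, G.Antisym f' → (∀ d, f' d ≤ c d) →
      (∀ v, v ≠ s → v ≠ t → G.inflow f' v = 0) →
      G.inflow f' t ≤ G.inflow f t) ∧
    ¬ G.ResReach (fun d => c d - f d) s t := by

  classical
  obtain ⟨hanti, hcap, hcons, hle, hmax⟩ := hf
  -- Part 1
  have part1 : ∀ f' : D → ℝ, G.Antisym f' → (∀ d, f' d ≤ c d) →
      (∀ v, v ≠ s → v ≠ t → G.inflow f' v = 0) →
      G.inflow f' t ≤ G.inflow f t := by
    intro f' ha' hc' hcons'
    by_contra hgt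
    push_neg at hgt
    set v := G.inflow f t with hv
    set v' := G.inflow f' t with hv'
    by_cases hx : v' ≤ x
    · exact absurd (hmax f' ha' hc' hcons' hx) (not_le.2 hgt)
    · push_neg at hx
      set lam : ℝ := (x - v) / (v' - v) with hlam
      have hvv : 0 < v' - v := by linarith
      have hlam0 : 0 ≤ lam := by
        apply div_nonneg <;> linarith
      have hlam1 : lam ≤ 1 := by
        rw [hlam, div_le_one hvv]; linarith
      set g : D → ℝ := fun d => f d + lam * (f' d - f d) with hg
      have hga : G.Antisym g := by
        intro d
        simp only [hg, hanti d, ha' d]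
        ring
      have hgc : ∀ d, g d ≤ c d := by
        intro d
        have : g d = (1 - lam) * f d + lam * f' d := by simp only [hg]; ring
        rw [this]
        calc (1 - lam) * f d + lam * f' d
            ≤ (1 - lam) * c d + lam * c d := by
              gcongr
              · exact hcap d
              · exact hc' d
          _ = c d := by ring
      have hginf : ∀ w, G.inflow g w = G.inflow f w + lam * (G.inflow f' w - G.inflow f w) := by
        intro w
        have : G.inflow g w
            = G.inflow f w + G.inflow (fun d => lam * (f' d - f d)) w := G.inflow_add' _ _ w
        rw [this, G.inflow_smul', G.inflow_sub']
      have hgcons : ∀ w, w ≠ s → w ≠ t → G.inflow g w = 0 := by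
        intro w hw1 hw2
        rw [hginf, hcons w hw1 hw2, hcons' w hw1 hw2]
        ring
      have hgt' : G.inflow g t = x := by
        rw [hginf, hlam]
        field_simp
        rw [← hv, ← hv']; ring
      have := hmax g hga hgc hgcons (le_of_eq hgt')
      rw [hgt'] at this
      linarith
  refine ⟨part1, ?_⟩
  -- Part 2
  intro hreach
  obtain ⟨L, hwalk, hpos⟩ := G.reach_walk hreach
  have hLne : L ≠ [] := by
    intro h
    subst h
    exact hst hwalk
  have hlen : 0 < (L.length : ℝ) := by
    have := List.length_pos_iff.2 hLne
    exact_mod_cast this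
  set S : Finset D := L.toFinset with hS
  have hSne : S.Nonempty := by
    obtain ⟨d, hd⟩ := List.exists_mem_of_ne_nil L hLne
    exact ⟨d, List.mem_toFinset.2 hd⟩
  set m : ℝ := S.inf' hSne (fun d => c d - f d) with hm
  have hm0 : 0 < m := by
    rw [hm]
    exact (Finset.lt_inf'_iff hSne).2 fun d hd => hpos d (List.mem_toFinset.1 hd)
  have hmle : ∀ d ∈ L, m ≤ c d - f d := fun d hd =>
    Finset.inf'_le _ (List.mem_toFinset.2 hd)
  set eps : ℝ := m / L.length with heps
  have heps0 : 0 < eps := div_pos hm0 hlen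
  set g : D → ℝ := fun d => f d + eps * G.chi L d with hg
  have hga : G.Antisym g := by
    intro d
    simp only [hg, hanti d, G.chi_rev]
    ring
  have hgc : ∀ d, g d ≤ c d := by
    intro d
    by_cases h : G.chi L d ≤ 0
    · have : eps * G.chi L d ≤ 0 := mul_nonpos_of_nonneg_of_nonpos heps0.le h
      have := hcap d
      simp only [hg]
      linarith
    · push_neg at h
      have hdL : d ∈ L := G.mem_of_chi_pos h
      have h1 : eps * G.chi L d ≤ eps * L.length :=
        mul_le_mul_of_nonneg_left (G.chi_le_length L d) heps0.le
      have h2 : eps * (L.length : ℝ) = m := by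
        rw [heps]
        field_simp
      have := hmle d hdL
      simp only [hg]
      linarith
  have hginf : ∀ w, G.inflow g w = G.inflow f w + eps * G.inflow (G.chi L) w := by
    intro w
    have : G.inflow g w
        = G.inflow f w + G.inflow (fun d => eps * G.chi L d) w := G.inflow_add' _ _ w
    rw [this, G.inflow_smul']
  have hchi := G.inflow_chi hwalk
  have hgcons : ∀ w, w ≠ s → w ≠ t → G.inflow g w = 0 := by
    intro w hw1 hw2
    rw [hginf, hcons w hw1 hw2, hchi w, if_neg hw2, if_neg hw1]
    ring
  have hgval : G.inflow g t = G.inflow f t + eps := by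
    rw [hginf, hchi t, if_pos rfl, if_neg (Ne.symm hst)]
    ring
  have := part1 g hga hgc hgcons
  rw [hgval] at this
  linarith
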